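/- arXiv:1804.03055 — 2 statements merged into one kernel-verified Lean document; each statement's English description precedes it below -/
import Mathlib

section
/- The parallel postulate fails in the upper half-plane: for every h-line L and every point p ∈ U with p ∉ L, there are infinitely many h-lines that contain p and are disjoint from L. -/
/-- An h-line in the upper half-plane: either a vertical half-line
`{z : Im z > 0, Re z = a}` or a semicircle `{z : Im z > 0, |z − c| = r}`
with real center `c` and radius `r > 0`. -/
def IsHLine (L : Set ℂ) : Prop :=
  (∃ a : ℝ, L = {z : ℂ | 0 < z.im ∧ z.re = a}) ∨
  (∃ c r : ℝ, 0 < r ∧ L = {z : ℂ | 0 < z.im ∧ ‖z - c‖ = r})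

/-- The semicircle through `p` centered at the real number `c`. -/
def Mc (p : ℂ) (c : ℝ) : Set ℂ :=
  {z : ℂ | 0 < z.im ∧ ‖z - c‖ = ‖p - c‖}

lemma sq_abs_sub_ofReal (z : ℂ) (c : ℝ) :
    (‖z - c‖)^2 = (z.re - c)^2 + z.im^2 := by
  rw [Complex.sq_norm, Complex.normSq_apply]
  simp [Complex.sub_re, Complex.sub_im]
  ring

lemma abs_sub_ofReal_pos (p : ℂ) (hp : 0 < p.im) (c : ℝ) :
    0 < ‖p - c‖ := by
  apply norm_pos_iff.mpr
  intro h
  have h2 : (p - (c:ℂ)).im = 0 := by rw [h]; simp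
  simp [Complex.sub_im] at h2
  linarith

/-- Key lemma: if for infinitely many centers `c` the semicircle through `p`
centered at `c` misses `L`, then there are infinitely many h-lines through `p`
disjoint from `L`. -/
lemma key (p : ℂ) (hp : 0 < p.im) (L : Set ℂ) (S : Set ℝ) (hS : S.Infinite)
    (h : ∀ c ∈ S, ∀ z ∈ L, ‖z - c‖ ≠ ‖p - c‖) :
    {M : Set ℂ | IsHLine M ∧ p ∈ M ∧ M ∩ L = ∅}.Infinite := by
  have := hS.to_subtype
  apply Set.infinite_of_injective_forall_mem
    (f := fun c : S => Mc p (c : ℝ))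
  · intro c c' hcc
    -- top points of the two semicircles
    set r := ‖p - (c : ℝ)‖ with hr
    set r' := ‖p - ((c' : S) : ℝ)‖ with hr'
    have hrpos : 0 < r := abs_sub_ofReal_pos p hp _
    have hr'pos : 0 < r' := abs_sub_ofReal_pos p hp _
    have h1 : ((c : ℝ) : ℂ) + r * Complex.I ∈ Mc p (c : ℝ) := by
      constructor
      · simp [hrpos]
      · have : ((c : ℝ) : ℂ) + r * Complex.I - (c : ℝ) = r * Complex.I := by ring
        rw [this]
        simp [abs_of_pos hrpos]; exact hr
    have h2 : (((c' : S) : ℝ) : ℂ) + r' * Complex.I ∈ Mc p ((c' : S) : ℝ) := by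
      constructor
      · simp [hr'pos]
      · have : (((c' : S) : ℝ) : ℂ) + r' * Complex.I - ((c' : S) : ℝ) = r' * Complex.I := by
          ring
        rw [this]
        simp [abs_of_pos hr'pos]; exact hr'
    have hMeq : Mc p (c : ℝ) = Mc p ((c' : S) : ℝ) := hcc
    rw [hMeq] at h1
    rw [← hMeq] at h2
    have e1 := h1.2
    have e2 := h2.2
    have e1' := congrArg (·^2) e1
    have e2' := congrArg (·^2) e2
    simp only [sq_abs_sub_ofReal, Complex.add_re, Complex.add_im, Complex.ofReal_re,
      Complex.ofReal_im, Complex.mul_re, Complex.mul_im, Complex.I_re, Complex.I_im] at e1' e2'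
    have hq1 : r^2 = (p.re - (c : ℝ))^2 + p.im^2 := sq_abs_sub_ofReal p (c : ℝ)
    have hq2 : r'^2 = (p.re - ((c' : S) : ℝ))^2 + p.im^2 := sq_abs_sub_ofReal p ((c' : S) : ℝ)
    have hcr : ((c : ℝ) - ((c' : S) : ℝ)) = 0 := by
      nlinarith [sq_nonneg ((c:ℝ) - ((c' : S) : ℝ))]
    exact Subtype.ext (by linarith)
  · intro c
    refine ⟨Or.inr ⟨(c : ℝ), ‖p - (c : ℝ)‖,
      abs_sub_ofReal_pos p hp _, rfl⟩, ⟨hp, rfl⟩, ?_⟩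
    ext z
    simp only [Set.mem_inter_iff, Set.mem_empty_iff_false, iff_false, not_and]
    intro hz hzL
    exact absurd hz.2 (h c c.2 z hzL)

/-- The parallel postulate fails in the upper half-plane: through any point of
the upper half-plane not on a given h-line there pass infinitely many h-lines
disjoint from the given one. -/
theorem parallel_postulate_fails_in_upper_half_plane
    (L : Set ℂ) (hL : IsHLine L) (p : ℂ) (hp : 0 < p.im) (hpL : p ∉ L) :
    {M : Set ℂ | IsHLine M ∧ p ∈ M ∧ M ∩ L = ∅}.Infinite := by
  rcases hL with ⟨a, rfl⟩ | ⟨c0, r0, hr0, rfl⟩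
  · -- vertical line case
    have hpa : p.re ≠ a := fun h => hpL ⟨hp, h⟩
    -- choose centers c with (a - c)^2 > |p - c|^2
    have main : ∀ c : ℝ, (p.re - c)^2 + p.im^2 < (a - c)^2 →
        ∀ z ∈ {z : ℂ | 0 < z.im ∧ z.re = a},
          ‖z - c‖ ≠ ‖p - c‖ := by
      intro c hc z hz heq
      have := congrArg (·^2) heq
      simp only [sq_abs_sub_ofReal] at this
      rw [hz.2] at this
      nlinarith [sq_nonneg z.im, hz.1]
    rcases lt_or_gt_of_ne hpa with hlt | hgt
    · -- p.re < a : take c very negative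
      apply key p hp _ (Set.Iio ((a^2 - p.re^2 - p.im^2) / (2*(a - p.re)))) (Set.Iio_infinite _)
      intro c hc
      apply main
      simp only [Set.mem_Iio] at hc
      have ha : 0 < a - p.re := by linarith
      rw [lt_div_iff₀ (by linarith : (0:ℝ) < 2*(a - p.re))] at hc
      nlinarith
    · -- p.re > a : take c very positive
      apply key p hp _ (Set.Ioi ((p.re^2 + p.im^2 - a^2) / (2*(p.re - a)))) (Set.Ioi_infinite _)
      intro c hc
      apply main
      simp only [Set.mem_Ioi] at hc
      have ha : 0 < p.re - a := by linarith
      rw [div_lt_iff₀ (by linarith : (0:ℝ) < 2*(p.re - a))] at hc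
      nlinarith
  · -- semicircle case
    have hD : ‖p - c0‖ ≠ r0 := fun h => hpL ⟨hp, h⟩
    set D := ‖p - c0‖ with hDdef
    have tri1 : ∀ c : ℝ, D ≤ ‖p - c‖ + |c - c0| := by
      intro c
      have : p - (c0:ℂ) = (p - c) + ((c:ℂ) - c0) := by ring
      calc D = ‖(p - c) + ((c:ℂ) - c0)‖ := by rw [hDdef, ← this]
        _ ≤ ‖p - c‖ + ‖(c:ℂ) - c0‖ := norm_add_le _ _
        _ = ‖p - c‖ + |c - c0| := by
            rw [show ((c:ℂ) - c0) = ((c - c0 : ℝ) : ℂ) by push_cast; ring, Complex.norm_real, Real.norm_eq_abs]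
    have tri2 : ∀ c : ℝ, ‖p - c‖ ≤ D + |c - c0| := by
      intro c
      have : p - (c:ℂ) = (p - c0) + ((c0:ℂ) - c) := by ring
      calc ‖p - c‖ = ‖(p - c0) + ((c0:ℂ) - c)‖ := by rw [← this]
        _ ≤ D + ‖(c0:ℂ) - c‖ := norm_add_le _ _
        _ = D + |c - c0| := by
            rw [show ((c0:ℂ) - c) = ((c0 - c : ℝ) : ℂ) by push_cast; ring, Complex.norm_real, Real.norm_eq_abs,
              abs_sub_comm]
    have triz1 : ∀ (c : ℝ) (z : ℂ), ‖z - c‖ ≤ ‖z - c0‖ + |c - c0| := by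
      intro c z
      have : z - (c:ℂ) = (z - c0) + ((c0:ℂ) - c) := by ring
      calc ‖z - c‖ = ‖(z - c0) + ((c0:ℂ) - c)‖ := by rw [← this]
        _ ≤ ‖z - c0‖ + ‖(c0:ℂ) - c‖ := norm_add_le _ _
        _ = ‖z - c0‖ + |c - c0| := by
            rw [show ((c0:ℂ) - c) = ((c0 - c : ℝ) : ℂ) by push_cast; ring, Complex.norm_real, Real.norm_eq_abs,
              abs_sub_comm]
    have triz2 : ∀ (c : ℝ) (z : ℂ), ‖z - c0‖ ≤ ‖z - c‖ + |c - c0| := by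
      intro c z
      have : z - (c0:ℂ) = (z - c) + ((c:ℂ) - c0) := by ring
      calc ‖z - c0‖ = ‖(z - c) + ((c:ℂ) - c0)‖ := by rw [← this]
        _ ≤ ‖z - c‖ + ‖(c:ℂ) - c0‖ := norm_add_le _ _
        _ = ‖z - c‖ + |c - c0| := by
            rw [show ((c:ℂ) - c0) = ((c - c0 : ℝ) : ℂ) by push_cast; ring, Complex.norm_real, Real.norm_eq_abs]
    rcases lt_or_gt_of_ne hD with hin | hout
    · -- p inside the circle: D < r0
      set ε := (r0 - D) / 4 with hε
      have hεpos : 0 < ε := by rw [hε]; linarith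
      apply key p hp _ (Set.Ioo c0 (c0 + ε)) (Set.Ioo_infinite (by linarith))
      intro c hc z hz heq
      simp only [Set.mem_Ioo] at hc
      have habs : |c - c0| ≤ ε := by rw [abs_le]; constructor <;> linarith [hc.1, hc.2]
      have h1 := tri2 c
      have h2 := triz2 c z
      rw [hz.2, heq] at h2
      linarith
    · -- p outside the circle: D > r0
      set ε := (D - r0) / 4 with hε
      have hεpos : 0 < ε := by rw [hε]; linarith
      apply key p hp _ (Set.Ioo c0 (c0 + ε)) (Set.Ioo_infinite (by linarith))
      intro c hc z hz heq
      simp only [Set.mem_Ioo] at hc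
      have habs : |c - c0| ≤ ε := by rw [abs_le]; constructor <;> linarith [hc.1, hc.2]
      have h1 := tri1 c
      have h2 := triz1 c z
      rw [hz.2, heq] at h2
      linarith
end

section
/- The sum of the angles of a spherical triangle always exceeds π (and is less than 3π): let A, B, C be linearly independent unit vectors in ℝ³, and let α be the angle between the vectors B − ⟨B,A⟩A and C − ⟨C,A⟩A (the tangent directions at A of the great-circle arcs from A to B and from A to C), with β and γ defined analogously at B and at C. Then π < α + β + γ < 3π. -/
open InnerProductGeometry Real

noncomputable section SphericalTriangleAux

variable {V : Type*} [NormedAddCommGroup V] [InnerProductSpace ℝ V]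

lemma key_unit (u m w : V) (hu : ‖u‖ = 1) (hm : ‖m‖ = 1) (hw : ‖w‖ = 1)
    (H2 : ∀ s : ℝ, u ≠ s • m) (H : ∀ s t : ℝ, w ≠ s • m + t • u) :
    angle u w < angle u m + angle m w := by
  by_cases hab : angle u m + angle m w ≤ π
  swap
  · push_neg at hab
    exact lt_of_le_of_lt (angle_le_pi u w) hab
  have hca : Real.cos (angle u m) = inner ℝ u m := by rw [cos_angle, hu, hm]; ring
  have hcb : Real.cos (angle m w) = inner ℝ m w := by rw [cos_angle, hm, hw]; ring
  have hcc : Real.cos (angle u w) = inner ℝ u w := by rw [cos_angle, hu, hw]; ring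
  set P : ℝ := inner ℝ u m with hP
  set Q : ℝ := inner ℝ m w with hQ
  set u' := u - P • m with hu'
  set w' := w - Q • m with hw'
  have hmm : (inner ℝ m m : ℝ) = 1 := by
    rw [real_inner_self_eq_norm_sq, hm]; norm_num
  have hiu : (inner ℝ u' w' : ℝ) = (inner ℝ u w : ℝ) - P * Q := by
    simp only [hu', hw', inner_sub_left, inner_sub_right, real_inner_smul_left,
      real_inner_smul_right, hmm]
    rw [← hP, ← hQ]; ring
  have hnu : ‖u'‖ = Real.sin (angle u m) := by
    have h1 : ‖u'‖ ^ 2 = Real.sin (angle u m) ^ 2 := by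
      rw [Real.sin_sq, hca, ← real_inner_self_eq_norm_sq]
      simp only [hu', inner_sub_left, inner_sub_right, real_inner_smul_left,
        real_inner_smul_right, hmm]
      have hum : (inner ℝ m u : ℝ) = P := by rw [hP, real_inner_comm]
      have huu : (inner ℝ u u : ℝ) = 1 := by rw [real_inner_self_eq_norm_sq, hu]; norm_num
      rw [hum, huu]; ring
    have h2 : 0 ≤ Real.sin (angle u m) := Real.sin_nonneg_of_nonneg_of_le_pi
      (angle_nonneg _ _) (angle_le_pi _ _)
    nlinarith [norm_nonneg u']
  have hnw : ‖w'‖ = Real.sin (angle m w) := by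
    have h1 : ‖w'‖ ^ 2 = Real.sin (angle m w) ^ 2 := by
      rw [Real.sin_sq, hcb, ← real_inner_self_eq_norm_sq]
      simp only [hw', inner_sub_left, inner_sub_right, real_inner_smul_left,
        real_inner_smul_right, hmm]
      have hww : (inner ℝ w w : ℝ) = 1 := by rw [real_inner_self_eq_norm_sq, hw]; norm_num
      have hwm : (inner ℝ w m : ℝ) = Q := by rw [hQ, real_inner_comm]
      rw [hwm, hww]; ring
    have h2 : 0 ≤ Real.sin (angle m w) := Real.sin_nonneg_of_nonneg_of_le_pi
      (angle_nonneg _ _) (angle_le_pi _ _)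
    nlinarith [norm_nonneg w']
  have hCS : (inner ℝ (-u') w' : ℝ) < ‖-u'‖ * ‖w'‖ := by
    rw [inner_lt_norm_mul_iff_real]
    intro hEq
    rw [norm_neg] at hEq
    by_cases hu0 : u' = 0
    · exact H2 P (by rw [← sub_eq_zero]; exact hu0)
    · have hnu0 : (0:ℝ) < ‖u'‖ := norm_pos_iff.mpr hu0
      set t : ℝ := -(‖u'‖⁻¹ * ‖w'‖) with ht
      have hw'eq : w' = t • u' := by
        have h4 := congrArg (fun z => (‖u'‖⁻¹ : ℝ) • z) hEq.symm
        rw [ht]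
        simp only [smul_smul, inv_mul_cancel₀ hnu0.ne', one_smul, smul_neg, neg_smul] at h4 ⊢
        exact h4
      apply H (Q - t * P) t
      have h5 : w - Q • m = t • (u - P • m) := by rw [← hw', ← hu', hw'eq]
      rw [sub_eq_iff_eq_add] at h5
      rw [h5]; module
  have hlt : Real.cos (angle u m + angle m w) < Real.cos (angle u w) := by
    rw [Real.cos_add, hca, hcb, hcc, ← hnu, ← hnw]
    rw [inner_neg_left, norm_neg] at hCS
    linarith [hiu, hCS]
  by_contra h
  push_neg at h
  have := Real.cos_le_cos_of_nonneg_of_le_pi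
    (add_nonneg (angle_nonneg u m) (angle_nonneg m w)) (angle_le_pi u w) h
  linarith


lemma sum_angles_lt_two_pi (u v w : V)
    (Hind : ∀ a b c : ℝ, a • u + b • v + c • w = 0 → a = 0 ∧ b = 0 ∧ c = 0) :
    angle u v + angle v w + angle u w < 2 * Real.pi := by
  have hu0 : u ≠ 0 := fun h => one_ne_zero (Hind 1 0 0 (by simp [h])).1
  have hv0 : v ≠ 0 := fun h => one_ne_zero (Hind 0 1 0 (by simp [h])).2.1
  have hw0 : w ≠ 0 := fun h => one_ne_zero (Hind 0 0 1 (by simp [h])).2.2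
  set u1 := ‖u‖⁻¹ • u with hu1
  set v1 := ‖v‖⁻¹ • v with hv1
  set w1 := ‖w‖⁻¹ • w with hw1
  have hnu1 : ‖u1‖ = 1 := norm_smul_inv_norm hu0
  have hnv1 : ‖v1‖ = 1 := norm_smul_inv_norm hv0
  have hnw1 : ‖w1‖ = 1 := norm_smul_inv_norm hw0
  have hui : (0:ℝ) < ‖u‖⁻¹ := inv_pos.mpr (norm_pos_iff.mpr hu0)
  have hvi : (0:ℝ) < ‖v‖⁻¹ := inv_pos.mpr (norm_pos_iff.mpr hv0)
  have hwi : (0:ℝ) < ‖w‖⁻¹ := inv_pos.mpr (norm_pos_iff.mpr hw0)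
  have Hind1 : ∀ a b c : ℝ, a • u1 + b • v1 + c • w1 = 0 → a = 0 ∧ b = 0 ∧ c = 0 := by
    intro a b c h
    rw [hu1, hv1, hw1, smul_smul, smul_smul, smul_smul] at h
    obtain ⟨h1, h2, h3⟩ := Hind _ _ _ h
    exact ⟨(mul_eq_zero.mp h1).resolve_right hui.ne',
      (mul_eq_zero.mp h2).resolve_right hvi.ne',
      (mul_eq_zero.mp h3).resolve_right hwi.ne'⟩
  have e1 : angle u v = angle u1 v1 := by
    rw [hu1, hv1, angle_smul_left_of_pos _ _ hui, angle_smul_right_of_pos _ _ hvi]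
  have e2 : angle v w = angle v1 w1 := by
    rw [hv1, hw1, angle_smul_left_of_pos _ _ hvi, angle_smul_right_of_pos _ _ hwi]
  have e3 : angle u w = angle u1 w1 := by
    rw [hu1, hw1, angle_smul_left_of_pos _ _ hui, angle_smul_right_of_pos _ _ hwi]
  have key := key_unit u1 (-v1) w1 hnu1 (by simpa using hnv1) hnw1
    (fun s hEq => one_ne_zero (Hind1 1 s 0 (by rw [show u1 = s • -v1 from hEq]; module)).1)
    (fun s t hEq =>
      one_ne_zero (Hind1 (-t) s 1 (by rw [show w1 = s • -v1 + t • u1 from hEq]; module)).2.2)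
  rw [angle_neg_right, angle_neg_left] at key
  rw [e1, e2, e3]
  linarith

abbrev E3 := EuclideanSpace ℝ (Fin 3)

def cp (x y : E3) : E3 :=
  WithLp.toLp 2 ![x 1 * y 2 - x 2 * y 1, x 2 * y 0 - x 0 * y 2, x 0 * y 1 - x 1 * y 0]

lemma inner3 (x y : E3) : (inner ℝ x y : ℝ) = x 0 * y 0 + x 1 * y 1 + x 2 * y 2 := by
  simp [PiLp.inner_apply, Fin.sum_univ_three, RCLike.inner_apply]; ring

lemma cp0 (x y : E3) : cp x y 0 = x 1 * y 2 - x 2 * y 1 := rfl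
lemma cp1 (x y : E3) : cp x y 1 = x 2 * y 0 - x 0 * y 2 := rfl
lemma cp2 (x y : E3) : cp x y 2 = x 0 * y 1 - x 1 * y 0 := rfl

lemma cp_orth_left (x y : E3) : (inner ℝ (cp x y) x : ℝ) = 0 := by
  simp only [inner3, cp0, cp1, cp2]; ring

lemma cp_orth_right (x y : E3) : (inner ℝ (cp x y) y : ℝ) = 0 := by
  simp only [inner3, cp0, cp1, cp2]; ring

lemma cp_anti (x y : E3) : cp x y = - cp y x := by
  ext i; fin_cases i <;> simp [cp] <;> ring

lemma cp_cyclic (x y z : E3) : (inner ℝ (cp x y) z : ℝ) = inner ℝ (cp y z) x := by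
  simp only [inner3, cp0, cp1, cp2]; ring

lemma det_ne (A B C : E3) (hind : LinearIndependent ℝ ![A, B, C]) :
    (inner ℝ (cp B C) A : ℝ) ≠ 0 := by
  set M : Matrix (Fin 3) (Fin 3) ℝ := Matrix.of ![(A : Fin 3 → ℝ), B, C] with hM
  have h : LinearIndependent ℝ (fun i => M i) := by
    have := hind.map' (WithLp.linearEquiv 2 ℝ (Fin 3 → ℝ)).toLinearMap
      (WithLp.linearEquiv 2 ℝ (Fin 3 → ℝ)).ker
    have e : (fun i => M i) = ⇑(WithLp.linearEquiv 2 ℝ (Fin 3 → ℝ)) ∘ ![A, B, C] := by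
      ext i j; fin_cases i <;> rfl
    rw [e]; exact this
  have h2 := Matrix.linearIndependent_rows_iff_isUnit.mp h
  have h3 : M.det ≠ 0 := ((Matrix.isUnit_iff_isUnit_det M).mp h2).ne_zero
  intro hD
  apply h3
  rw [Matrix.det_fin_three]
  simp only [inner3, cp0, cp1, cp2] at hD
  simp only [hM, Matrix.of_apply, Matrix.cons_val', Matrix.cons_val_zero, Matrix.cons_val_one,
    Matrix.head_cons, Matrix.empty_val', Matrix.cons_val_fin_one, Matrix.head_fin_const,
    Matrix.cons_val_two, Matrix.tail_cons]
  linear_combination hD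

lemma angle_congr {x y x' y' : E3} (h1 : (inner ℝ x y : ℝ) = inner ℝ x' y')
    (h2 : ‖x‖ = ‖x'‖) (h3 : ‖y‖ = ‖y'‖) : angle x y = angle x' y' := by
  unfold angle
  rw [h1, h2, h3]

lemma norm_eq_of_inner (x y : E3) (h : (inner ℝ x x : ℝ) = inner ℝ y y) : ‖x‖ = ‖y‖ := by
  rw [norm_eq_sqrt_real_inner, norm_eq_sqrt_real_inner, h]

/-- The tangent-angle at a vertex equals the angle between cross products. -/
lemma tangent_angle_eq (A X Y : E3) (hA : ‖A‖ = 1) :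
    angle (X - (inner ℝ X A : ℝ) • A) (Y - (inner ℝ Y A : ℝ) • A) = angle (cp A X) (cp A Y) := by
  have hA2 : A 0 ^ 2 + A 1 ^ 2 + A 2 ^ 2 = 1 := by
    have h : (inner ℝ A A : ℝ) = 1 := by
      rw [real_inner_self_eq_norm_sq, hA]; norm_num
    rw [inner3] at h; linear_combination h
  apply angle_congr
  · simp only [inner3, cp0, cp1, cp2, PiLp.sub_apply, PiLp.smul_apply, smul_eq_mul]
    linear_combination ((X 0 * A 0 + X 1 * A 1 + X 2 * A 2) * (Y 0 * A 0 + Y 1 * A 1 + Y 2 * A 2)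
      - (X 0 * Y 0 + X 1 * Y 1 + X 2 * Y 2)) * hA2
  · apply norm_eq_of_inner
    simp only [inner3, cp0, cp1, cp2, PiLp.sub_apply, PiLp.smul_apply, smul_eq_mul]
    linear_combination ((X 0 * A 0 + X 1 * A 1 + X 2 * A 2) ^ 2
      - (X 0 * X 0 + X 1 * X 1 + X 2 * X 2)) * hA2
  · apply norm_eq_of_inner
    simp only [inner3, cp0, cp1, cp2, PiLp.sub_apply, PiLp.smul_apply, smul_eq_mul]
    linear_combination ((Y 0 * A 0 + Y 1 * A 1 + Y 2 * A 2) ^ 2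
      - (Y 0 * Y 0 + Y 1 * Y 1 + Y 2 * Y 2)) * hA2

end SphericalTriangleAux

/-- The sum of the angles of a spherical triangle with vertices `A, B, C`
(linearly independent unit vectors in `ℝ³`) always exceeds `π` and is less
than `3π`, where the angle at a vertex is the angle between the tangent
directions of the two great-circle arcs emanating from it. -/
theorem spherical_triangle_angle_sum_gt_pi_lt_three_pi
    (A B C : EuclideanSpace ℝ (Fin 3))
    (hA : ‖A‖ = 1) (hB : ‖B‖ = 1) (hC : ‖C‖ = 1)
    (hind : LinearIndependent ℝ ![A, B, C]) :
    Real.pi <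
        angle (B - (inner ℝ B A : ℝ) • A) (C - (inner ℝ C A : ℝ) • A)
      + angle (C - (inner ℝ C B : ℝ) • B) (A - (inner ℝ A B : ℝ) • B)
      + angle (A - (inner ℝ A C : ℝ) • C) (B - (inner ℝ B C : ℝ) • C) ∧
    angle (B - (inner ℝ B A : ℝ) • A) (C - (inner ℝ C A : ℝ) • A)
      + angle (C - (inner ℝ C B : ℝ) • B) (A - (inner ℝ A B : ℝ) • B)
      + angle (A - (inner ℝ A C : ℝ) • C) (B - (inner ℝ B C : ℝ) • C)
      < 3 * Real.pi := by
  set u := cp B C with hu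
  set v := cp C A with hv
  set w := cp A B with hw
  have hD : (inner ℝ u A : ℝ) ≠ 0 := det_ne A B C hind
  have hDB : (inner ℝ v B : ℝ) = inner ℝ u A := by rw [hu, hv, cp_cyclic C A B, cp_cyclic A B C]
  have hDC : (inner ℝ w C : ℝ) = inner ℝ u A := by
    rw [hu, hw]; exact cp_cyclic A B C
  have Hcross : ∀ a b c : ℝ, a • u + b • v + c • w = 0 → a = 0 ∧ b = 0 ∧ c = 0 := by
    intro a b c h
    have hA' := congrArg (fun z : E3 => (inner ℝ z A : ℝ)) h
    have hB' := congrArg (fun z : E3 => (inner ℝ z B : ℝ)) h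
    have hC' := congrArg (fun z : E3 => (inner ℝ z C : ℝ)) h
    simp only [inner_add_left, real_inner_smul_left, inner_zero_left] at hA' hB' hC'
    rw [show (inner ℝ v A : ℝ) = 0 from cp_orth_right C A,
      show (inner ℝ w A : ℝ) = 0 from cp_orth_left A B] at hA'
    rw [show (inner ℝ u B : ℝ) = 0 from cp_orth_left B C,
      show (inner ℝ w B : ℝ) = 0 from cp_orth_right A B, hDB] at hB'
    rw [show (inner ℝ u C : ℝ) = 0 from cp_orth_right B C,
      show (inner ℝ v C : ℝ) = 0 from cp_orth_left C A, hDC] at hC'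
    refine ⟨?_, ?_, ?_⟩
    · have : a * (inner ℝ u A : ℝ) = 0 := by linarith
      exact (mul_eq_zero.mp this).resolve_right hD
    · have : b * (inner ℝ u A : ℝ) = 0 := by linarith
      exact (mul_eq_zero.mp this).resolve_right hD
    · have : c * (inner ℝ u A : ℝ) = 0 := by linarith
      exact (mul_eq_zero.mp this).resolve_right hD
  have hsum : angle u v + angle v w + angle u w < 2 * Real.pi :=
    sum_angles_lt_two_pi u v w Hcross
  have hpos : 0 < angle u v := by
    rcases (angle_nonneg u v).lt_or_eq with h | h
    · exact h
    · exfalso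
      obtain ⟨-, r, -, hr⟩ := angle_eq_zero_iff.mp h.symm
      exact neg_ne_zero.mpr one_ne_zero
        (Hcross r (-1) 0 (by rw [hr]; module)).2.1
  -- rewrite the three angles
  have eA : angle (B - (inner ℝ B A : ℝ) • A) (C - (inner ℝ C A : ℝ) • A)
      = Real.pi - angle w v := by
    rw [tangent_angle_eq A B C hA, ← hw, show cp A C = -v by rw [hv, cp_anti A C],
      angle_neg_right]
  have eB : angle (C - (inner ℝ C B : ℝ) • B) (A - (inner ℝ A B : ℝ) • B)
      = Real.pi - angle u w := by
    rw [tangent_angle_eq B C A hB, ← hu, show cp B A = -w by rw [hw, cp_anti B A],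
      angle_neg_right]
  have eC : angle (A - (inner ℝ A C : ℝ) • C) (B - (inner ℝ B C : ℝ) • C)
      = Real.pi - angle v u := by
    rw [tangent_angle_eq C A B hC, ← hv, show cp C B = -u by rw [hu, cp_anti C B],
      angle_neg_right]
  rw [eA, eB, eC, angle_comm w v, angle_comm v u]
  exact ⟨by linarith, by linarith [angle_nonneg v w, angle_nonneg u w]⟩
end
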